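/- For any two random variables X₁, X₂ and any interactive two-party communication F (i.e., F = (F₁,...,F_r) where each odd-indexed message is a function of X₁ and the previous messages, and each even-indexed message is a function of X₂ and the previous messages), the entropy of the transcript satisfies H(F) ≥ H(F | X₁) + H(F | X₂). -/

import Mathlib

open Finset Real

noncomputable def ent {Ω α : Type*} [Fintype Ω] [Fintype α] [DecidableEq α]
    (p : Ω → ℝ) (X : Ω → α) : ℝ :=
  - ∑ a : α, (∑ ω ∈ univ.filter (fun ω => X ω = a), p ω) *
      Real.logb 2 (∑ ω ∈ univ.filter (fun ω => X ω = a), p ω)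

noncomputable def condEnt {Ω α β : Type*} [Fintype Ω] [Fintype α] [DecidableEq α]
    [Fintype β] [DecidableEq β] (p : Ω → ℝ) (X : Ω → α) (Y : Ω → β) : ℝ :=
  ent p (fun ω => (X ω, Y ω)) - ent p Y

noncomputable def mi {Ω α β : Type*} [Fintype Ω] [Fintype α] [DecidableEq α]
    [Fintype β] [DecidableEq β] (p : Ω → ℝ) (X : Ω → α) (Y : Ω → β) : ℝ :=
  ent p X + ent p Y - ent p (fun ω => (X ω, Y ω))

noncomputable def cmi {Ω α β γ : Type*} [Fintype Ω] [Fintype α] [DecidableEq α]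
    [Fintype β] [DecidableEq β] [Fintype γ] [DecidableEq γ]
    (p : Ω → ℝ) (X : Ω → α) (Y : Ω → β) (Z : Ω → γ) : ℝ :=
  condEnt p X Z + condEnt p Y Z - condEnt p (fun ω => (X ω, Y ω)) Z

section helpers
variable {Ω α β δ ε : Type*} [Fintype Ω] (p : Ω → ℝ)

noncomputable def dst (X : Ω → α) [DecidableEq α] (a : α) : ℝ :=
  ∑ ω ∈ univ.filter (fun ω => X ω = a), p ω

lemma dst_nonneg (hp : ∀ ω, 0 ≤ p ω) (X : Ω → α) [DecidableEq α] (a : α) :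
    0 ≤ dst p X a :=
  Finset.sum_nonneg fun ω _ => hp ω

lemma ent_eq [Fintype α] [DecidableEq α] (X : Ω → α) :
    ent p X = (∑ a, negMulLog (dst p X a)) / Real.log 2 := by
  unfold ent dst negMulLog
  rw [← Finset.sum_neg_distrib, Finset.sum_div]
  congr 1; funext a
  rw [Real.logb]
  ring

lemma dst_comp [Fintype δ] [DecidableEq δ] [DecidableEq ε] (Z : Ω → δ) (φ : δ → ε) (e : ε) :
    ∑ d ∈ univ.filter (fun d => φ d = e), dst p Z d
      = dst p (fun ω => φ (Z ω)) e := by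
  unfold dst
  rw [Finset.sum_filter]
  have h1 : ∀ d : δ, (if φ d = e then ∑ ω ∈ univ.filter (fun ω => Z ω = d), p ω else 0)
      = ∑ ω ∈ univ.filter (fun ω => Z ω = d), (if φ (Z ω) = e then p ω else 0) := by
    intro d
    have h2 : ∀ ω ∈ univ.filter (fun ω => Z ω = d),
        (if φ (Z ω) = e then p ω else 0) = (if φ d = e then p ω else 0) := fun ω hω => by
      rw [(Finset.mem_filter.mp hω).2]
    rw [Finset.sum_congr rfl h2]
    split <;> simp
  simp_rw [h1]
  rw [Finset.sum_fiberwise, ← Finset.sum_filter]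

lemma dst_mul_comp [Fintype δ] [DecidableEq δ] [Fintype ε] [DecidableEq ε]
    (Z : Ω → δ) (φ : δ → ε) (h : ε → ℝ) :
    ∑ d, dst p Z d * h (φ d) = ∑ e, dst p (fun ω => φ (Z ω)) e * h e := by
  have h0 : ∀ e : ε, dst p (fun ω => φ (Z ω)) e * h e
      = ∑ d ∈ univ.filter (fun d => φ d = e), dst p Z d * h (φ d) := by
    intro e
    rw [← dst_comp, Finset.sum_mul]
    refine Finset.sum_congr rfl fun d hd => ?_
    rw [(Finset.mem_filter.mp hd).2]
  simp_rw [h0]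
  rw [Finset.sum_fiberwise]

lemma sum_dst [Fintype δ] [DecidableEq δ] (Z : Ω → δ) : ∑ d, dst p Z d = ∑ ω, p ω := by
  unfold dst
  exact Finset.sum_fiberwise _ _ _

lemma gibbs {ι : Type*} (s : Finset ι) (P Q : ι → ℝ) (hP : ∀ i ∈ s, 0 ≤ P i)
    (hQ : ∀ i ∈ s, 0 ≤ Q i) (hPQ : ∀ i ∈ s, 0 < P i → 0 < Q i) :
    ∑ i ∈ s, P i * Real.log (Q i / P i) ≤ ∑ i ∈ s, Q i - ∑ i ∈ s, P i := by
  rw [← Finset.sum_sub_distrib]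
  refine Finset.sum_le_sum fun i hi => ?_
  rcases eq_or_lt_of_le (hP i hi) with h | h
  · simp [← h, hQ i hi]
  · have hq := hPQ i hi h
    have h3 := Real.log_le_sub_one_of_pos (div_pos hq h)
    calc P i * Real.log (Q i / P i) ≤ P i * (Q i / P i - 1) :=
          mul_le_mul_of_nonneg_left h3 h.le
      _ = Q i - P i := by field_simp

end helpers

section more
variable {Ω α β δ : Type*} [Fintype Ω] (p : Ω → ℝ)

lemma ent_comp_inj [Fintype α] [DecidableEq α] [Fintype β] [DecidableEq β]
    (X : Ω → α) (e : α → β) (he : Function.Injective e) :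
    ent p (fun ω => e (X ω)) = ent p X := by
  rw [ent_eq, ent_eq]
  congr 1
  rw [← Finset.sum_subset (Finset.subset_univ ((univ : Finset α).image e))]
  · rw [Finset.sum_image (fun a _ b _ h => he h)]
    refine Finset.sum_congr rfl fun a _ => ?_
    congr 1
    unfold dst
    refine Finset.sum_congr ?_ fun _ _ => rfl
    ext ω
    simp [he.eq_iff]
  · intro b _ hb
    have h0 : dst p (fun ω => e (X ω)) b = 0 := by
      unfold dst
      rw [Finset.filter_false_of_mem, Finset.sum_empty]
      intro ω _ h
      exact hb (Finset.mem_image.mpr ⟨X ω, Finset.mem_univ _, h⟩)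
    simp [h0]

lemma dst_le_one (hp : ∀ ω, 0 ≤ p ω) (hp1 : ∑ ω, p ω = 1)
    [DecidableEq α] (X : Ω → α) (a : α) : dst p X a ≤ 1 := by
  rw [← hp1]
  exact Finset.sum_le_sum_of_subset_of_nonneg (Finset.filter_subset _ _)
    (fun ω _ _ => hp ω)

lemma ent_nonneg (hp : ∀ ω, 0 ≤ p ω) (hp1 : ∑ ω, p ω = 1)
    [Fintype α] [DecidableEq α] (X : Ω → α) : 0 ≤ ent p X := by
  rw [ent_eq]
  apply div_nonneg _ (Real.log_nonneg one_le_two)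
  exact Finset.sum_nonneg fun a _ =>
    Real.negMulLog_nonneg (dst_nonneg p hp X a) (dst_le_one p hp hp1 X a)

lemma dst_marg [Fintype α] [DecidableEq α] [DecidableEq δ]
    (W : Ω → α) (V : Ω → δ) (c : δ) :
    ∑ a, dst p (fun ω => (W ω, V ω)) (a, c) = dst p V c := by
  unfold dst
  have h : ∀ a : α, (univ.filter fun ω => (W ω, V ω) = (a, c))
      = (univ.filter fun ω => V ω = c).filter fun ω => W ω = a := by
    intro a; ext ω; simp [Prod.ext_iff, and_comm]
  simp_rw [h]
  exact Finset.sum_fiberwise _ _ _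

lemma dst_le_dst_comp [Fintype δ] [DecidableEq δ] [DecidableEq β]
    (hp : ∀ ω, 0 ≤ p ω) (Z : Ω → δ) (φ : δ → β) (d : δ) :
    dst p Z d ≤ dst p (fun ω => φ (Z ω)) (φ d) := by
  unfold dst
  refine Finset.sum_le_sum_of_subset_of_nonneg ?_ (fun ω _ _ => hp ω)
  intro ω hω
  simp only [Finset.mem_filter, Finset.mem_univ, true_and] at hω ⊢
  rw [hω]
end more
section submod
variable {Ω α β δ : Type*} [Fintype Ω] (p : Ω → ℝ)
  [Fintype α] [DecidableEq α] [Fintype β] [DecidableEq β] [Fintype δ] [DecidableEq δ]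

lemma ent_submod (hp : ∀ ω, 0 ≤ p ω) (A : Ω → α) (B : Ω → β) (C : Ω → δ) :
    ent p (fun ω => (A ω, (B ω, C ω))) + ent p C
      ≤ ent p (fun ω => (A ω, C ω)) + ent p (fun ω => (B ω, C ω)) := by
  have hlog : (0:ℝ) < Real.log 2 := Real.log_pos one_lt_two
  rw [ent_eq, ent_eq, ent_eq, ent_eq, ← add_div, ← add_div,
    div_le_div_iff_of_pos_right hlog]
  set Z : Ω → α × β × δ := fun ω => (A ω, (B ω, C ω)) with hZ
  set P3 : α × β × δ → ℝ := dst p Z with hP3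
  set PAC : α × δ → ℝ := dst p (fun ω => (A ω, C ω)) with hPAC
  set PBC : β × δ → ℝ := dst p (fun ω => (B ω, C ω)) with hPBC
  set PC : δ → ℝ := dst p C with hPC
  set Q : α × β × δ → ℝ := fun v => PAC (v.1, v.2.2) * PBC v.2 / PC v.2.2 with hQ
  have hACcomp : (fun ω => (A ω, C ω)) = fun ω => ((Z ω).1, (Z ω).2.2) := rfl
  have hBCcomp : (fun ω => (B ω, C ω)) = fun ω => (Z ω).2 := rfl
  have hCcomp : C = fun ω => (Z ω).2.2 := rfl
  have hP3AC : ∀ v, P3 v ≤ PAC (v.1, v.2.2) := fun v => by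
    rw [hPAC, hACcomp]; exact dst_le_dst_comp p hp Z (fun v => (v.1, v.2.2)) v
  have hP3BC : ∀ v, P3 v ≤ PBC v.2 := fun v => by
    rw [hPBC, hBCcomp]; exact dst_le_dst_comp p hp Z Prod.snd v
  have hP3C : ∀ v, P3 v ≤ PC v.2.2 := fun v => by
    rw [hPC, hCcomp]; exact dst_le_dst_comp p hp Z (fun v => v.2.2) v
  have hP3n : ∀ v, 0 ≤ P3 v := dst_nonneg p hp Z
  have hPACn : ∀ v, 0 ≤ PAC v := dst_nonneg p hp _
  have hPBCn : ∀ v, 0 ≤ PBC v := dst_nonneg p hp _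
  have hPCn : ∀ c, 0 ≤ PC c := dst_nonneg p hp C
  have hQn : ∀ v, 0 ≤ Q v := fun v =>
    div_nonneg (mul_nonneg (hPACn _) (hPBCn _)) (hPCn _)
  have hQpos : ∀ v, 0 < P3 v → 0 < Q v := fun v hv =>
    div_pos (mul_pos (lt_of_lt_of_le hv (hP3AC v)) (lt_of_lt_of_le hv (hP3BC v)))
      (lt_of_lt_of_le hv (hP3C v))
  -- sum of Q is at most sum of P3
  have hsumQ : ∑ v, Q v ≤ ∑ v, P3 v := by
    have h1 : ∑ v : α × β × δ, Q v = ∑ y : β × δ, PC y.2 * (PBC y / PC y.2) := by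
      rw [Fintype.sum_prod_type, Finset.sum_comm]
      refine Finset.sum_congr rfl fun y _ => ?_
      have hy : ∀ a : α, Q (a, y) = PAC (a, y.2) * (PBC y / PC y.2) := fun a => by
        simp only [hQ]; ring
      simp_rw [hy]
      rw [← Finset.sum_mul, hPAC, hPC, dst_marg p A C y.2]
    have h2 : ∑ y : β × δ, PC y.2 * (PBC y / PC y.2) ≤ ∑ y : β × δ, PBC y := by
      refine Finset.sum_le_sum fun y _ => ?_
      by_cases hc : PC y.2 = 0
      · rw [hc]; simpa using hPBCn y
      · rw [mul_comm, div_mul_cancel₀ _ hc]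
    have h3 : ∑ y : β × δ, PBC y = ∑ v : α × β × δ, P3 v := by
      rw [hPBC, hP3, sum_dst, sum_dst]
    linarith
  have G := gibbs (univ : Finset (α × β × δ)) P3 Q (fun v _ => hP3n v)
    (fun v _ => hQn v) (fun v _ => hQpos v)
  have expand : ∀ v : α × β × δ, P3 v * Real.log (Q v / P3 v)
      = P3 v * Real.log (PAC (v.1, v.2.2)) + P3 v * Real.log (PBC v.2)
        - P3 v * Real.log (PC v.2.2) - P3 v * Real.log (P3 v) := by
    intro v
    rcases eq_or_lt_of_le (hP3n v) with h | h
    · rw [← h]; ring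
    · have h1 := lt_of_lt_of_le h (hP3AC v)
      have h2 := lt_of_lt_of_le h (hP3BC v)
      have h3 := lt_of_lt_of_le h (hP3C v)
      simp only [hQ]
      rw [Real.log_div (by positivity) (ne_of_gt h),
        Real.log_div (by positivity) (ne_of_gt h3),
        Real.log_mul (ne_of_gt h1) (ne_of_gt h2)]
      ring
  rw [Finset.sum_congr rfl (fun v _ => expand v)] at G
  rw [Finset.sum_sub_distrib, Finset.sum_sub_distrib, Finset.sum_add_distrib] at G
  have T1 : ∑ v : α × β × δ, P3 v * Real.log (PAC (v.1, v.2.2))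
      = ∑ e : α × δ, PAC e * Real.log (PAC e) := by
    rw [hP3, hPAC, hACcomp]
    exact dst_mul_comp p Z (fun v => (v.1, v.2.2))
      (fun e => Real.log (dst p (fun ω => ((Z ω).1, (Z ω).2.2)) e))
  have T2 : ∑ v : α × β × δ, P3 v * Real.log (PBC v.2)
      = ∑ e : β × δ, PBC e * Real.log (PBC e) := by
    rw [hP3, hPBC, hBCcomp]
    exact dst_mul_comp p Z Prod.snd (fun e => Real.log (dst p (fun ω => (Z ω).2) e))
  have T3 : ∑ v : α × β × δ, P3 v * Real.log (PC v.2.2)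
      = ∑ e : δ, PC e * Real.log (PC e) := by
    rw [hP3, hPC, hCcomp]
    exact dst_mul_comp p Z (fun v => v.2.2)
      (fun e => Real.log (dst p (fun ω => (Z ω).2.2) e))
  rw [T1, T2, T3] at G
  have e1 : ∑ v : α × β × δ, Real.negMulLog (P3 v) = -∑ v, P3 v * Real.log (P3 v) := by
    simp [Real.negMulLog_eq_neg, Finset.sum_neg_distrib]
  have e2 : ∑ e : α × δ, Real.negMulLog (PAC e) = -∑ e, PAC e * Real.log (PAC e) := by
    simp [Real.negMulLog_eq_neg, Finset.sum_neg_distrib]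
  have e3 : ∑ e : β × δ, Real.negMulLog (PBC e) = -∑ e, PBC e * Real.log (PBC e) := by
    simp [Real.negMulLog_eq_neg, Finset.sum_neg_distrib]
  have e4 : ∑ c : δ, Real.negMulLog (PC c) = -∑ c, PC c * Real.log (PC c) := by
    simp [Real.negMulLog_eq_neg, Finset.sum_neg_distrib]
  rw [e1, e2, e3, e4]
  linarith

end submod
section derived
variable {Ω α β δ : Type*} [Fintype Ω] (p : Ω → ℝ)
  [Fintype α] [DecidableEq α] [Fintype β] [DecidableEq β] [Fintype δ] [DecidableEq δ]

lemma condEnt_cond_pair_le (hp : ∀ ω, 0 ≤ p ω) (A : Ω → α) (B : Ω → β) (C : Ω → δ) :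
    condEnt p A (fun ω => (C ω, B ω)) ≤ condEnt p A C := by
  have hinj : Function.Injective (fun x : α × (β × δ) => (x.1, (x.2.2, x.2.1))) := by
    intro x y h
    simp only [Prod.mk.injEq] at h
    exact Prod.ext h.1 (Prod.ext h.2.2 h.2.1)
  have h1 : ent p (fun ω => (A ω, (C ω, B ω))) = ent p (fun ω => (A ω, (B ω, C ω))) := by
    have h0 := ent_comp_inj p (fun ω => (A ω, (B ω, C ω)))
      (fun x => (x.1, (x.2.2, x.2.1))) hinj
    exact h0
  have h2 : ent p (fun ω => (C ω, B ω)) = ent p (fun ω => (B ω, C ω)) := by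
    have h0 := ent_comp_inj p (fun ω => (B ω, C ω)) Prod.swap Prod.swap_injective
    exact h0
  have h3 := ent_submod p hp A B C
  simp only [condEnt]
  linarith

omit [Fintype Ω] [Fintype β] in
set_option linter.unusedSectionVars false in
lemma pair_reassoc_inj {σ : Type*} (e : α × β → δ) (he : Function.Injective e) :
    Function.Injective (fun x : α × (β × σ) => (e (x.1, x.2.1), x.2.2)) := by
  intro x y h
  simp only [Prod.mk.injEq] at h
  have h5 := he h.1
  simp only [Prod.mk.injEq] at h5
  exact Prod.ext h5.1 (Prod.ext h5.2 h.2)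

lemma condEnt_comp_zero (X : Ω → α) (Y : Ω → β) (f : β → α)
    (h : ∀ ω, X ω = f (Y ω)) : condEnt p X Y = 0 := by
  have h1 : (fun ω => (X ω, Y ω)) = fun ω => ((fun y => (f y, y)) (Y ω)) := by
    funext ω; simp [h ω]
  simp only [condEnt, h1]
  rw [ent_comp_inj p Y (fun y => (f y, y)) (fun a b hab => congrArg Prod.snd hab)]
  ring

end derived
/-- For any interactive two-party communication `F = (F₁,…,F_r)` (odd-indexed
messages functions of `X₁` and past messages, even-indexed of `X₂` and past
messages), `H(F) ≥ H(F|X₁) + H(F|X₂)`. -/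
theorem interactive_comm_entropy_bound
    {Ω 𝒳₁ 𝒳₂ γ : Type*} [Fintype Ω] [Fintype 𝒳₁] [DecidableEq 𝒳₁]
    [Fintype 𝒳₂] [DecidableEq 𝒳₂] [Fintype γ] [DecidableEq γ]
    (p : Ω → ℝ) (hp : ∀ ω, 0 ≤ p ω) (hp1 : ∑ ω, p ω = 1)
    (X₁ : Ω → 𝒳₁) (X₂ : Ω → 𝒳₂) (r : ℕ) (F : Fin r → Ω → γ)
    (hodd : ∀ k : Fin r, k.val % 2 = 0 →
      ∃ g : 𝒳₁ → (Fin k.val → γ) → γ,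
        ∀ ω, F k ω = g (X₁ ω) (fun j => F ⟨j.1, j.2.trans k.2⟩ ω))
    (heven : ∀ k : Fin r, k.val % 2 = 1 →
      ∃ g : 𝒳₂ → (Fin k.val → γ) → γ,
        ∀ ω, F k ω = g (X₂ ω) (fun j => F ⟨j.1, j.2.trans k.2⟩ ω)) :
    ent p (fun ω (k : Fin r) => F k ω) ≥
      condEnt p (fun ω (k : Fin r) => F k ω) X₁ +
      condEnt p (fun ω (k : Fin r) => F k ω) X₂ := by
  have key : ∀ (m : ℕ) (hm : m ≤ r),
      condEnt p (fun ω (j : Fin m) => F ⟨j.1, lt_of_lt_of_le j.2 hm⟩ ω) X₁ +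
      condEnt p (fun ω (j : Fin m) => F ⟨j.1, lt_of_lt_of_le j.2 hm⟩ ω) X₂ ≤
      ent p (fun ω (j : Fin m) => F ⟨j.1, lt_of_lt_of_le j.2 hm⟩ ω) := by
    intro m
    induction m with
    | zero =>
      intro hm
      have h1 : condEnt p (fun ω (j : Fin 0) => F ⟨j.1, lt_of_lt_of_le j.2 hm⟩ ω) X₁ = 0 :=
        condEnt_comp_zero p _ X₁ (fun _ => fun j => j.elim0)
          (fun ω => funext fun j => j.elim0)
      have h2 : condEnt p (fun ω (j : Fin 0) => F ⟨j.1, lt_of_lt_of_le j.2 hm⟩ ω) X₂ = 0 :=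
        condEnt_comp_zero p _ X₂ (fun _ => fun j => j.elim0)
          (fun ω => funext fun j => j.elim0)
      have h3 := ent_nonneg p hp hp1 (fun ω (j : Fin 0) => F ⟨j.1, lt_of_lt_of_le j.2 hm⟩ ω)
      linarith
    | succ m ih =>
      intro hm
      have hmr : m < r := Nat.lt_of_succ_le hm
      have hmr' : m ≤ r := Nat.le_of_succ_le hm
      have IH := ih hmr'
      set Tm : Ω → (Fin m → γ) :=
        fun ω (j : Fin m) => F ⟨j.1, lt_of_lt_of_le j.2 hmr'⟩ ω with hTmdef
      set Tm1 : Ω → (Fin (m+1) → γ) :=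
        fun ω (j : Fin (m+1)) => F ⟨j.1, lt_of_lt_of_le j.2 hm⟩ ω with hTm1def
      set Fm : Ω → γ := F ⟨m, hmr⟩ with hFmdef
      set e : γ × (Fin m → γ) → (Fin (m+1) → γ) :=
        fun x j => if h : j.1 < m then x.2 ⟨j.1, h⟩ else x.1 with he_def
      have hTm1 : Tm1 = fun ω => e (Fm ω, Tm ω) := by
        funext ω j
        simp only [hTm1def, he_def, hTmdef, hFmdef]
        by_cases h : j.1 < m
        · rw [dif_pos h]
        · rw [dif_neg h]
          have hj : j.1 = m := Nat.le_antisymm (Nat.lt_succ_iff.mp j.2) (Nat.le_of_not_lt h)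
          congr 1
          exact Fin.ext hj
      have he : Function.Injective e := by
        intro x y hxy
        have h1 : x.1 = y.1 := by
          have h2 := congrFun hxy ⟨m, Nat.lt_succ_self m⟩
          simp only [he_def] at h2
          rwa [dif_neg (lt_irrefl m), dif_neg (lt_irrefl m)] at h2
        have h2 : x.2 = y.2 := by
          funext t
          have h3 := congrFun hxy ⟨t.1, t.2.trans (Nat.lt_succ_self m)⟩
          simp only [he_def] at h3
          rw [dif_pos t.2, dif_pos t.2] at h3
          exact h3
        exact Prod.ext h1 h2
      have E0 : ent p Tm1 = ent p Tm + condEnt p Fm Tm := by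
        have h0 : ent p Tm1 = ent p (fun ω => (Fm ω, Tm ω)) := by
          rw [hTm1]
          exact ent_comp_inj p (fun ω => (Fm ω, Tm ω)) e he
        rw [h0]
        simp only [condEnt]
        ring
      have E1 : condEnt p Tm1 X₁
          = condEnt p Tm X₁ + condEnt p Fm (fun ω => (Tm ω, X₁ ω)) := by
        have hh : ent p (fun ω => (Tm1 ω, X₁ ω))
            = ent p (fun ω => (Fm ω, (Tm ω, X₁ ω))) := by
          rw [hTm1]
          exact ent_comp_inj p (fun ω => (Fm ω, (Tm ω, X₁ ω)))
            (fun x => (e (x.1, x.2.1), x.2.2)) (pair_reassoc_inj e he)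
        simp only [condEnt]
        rw [hh]
        ring
      have E2 : condEnt p Tm1 X₂
          = condEnt p Tm X₂ + condEnt p Fm (fun ω => (Tm ω, X₂ ω)) := by
        have hh : ent p (fun ω => (Tm1 ω, X₂ ω))
            = ent p (fun ω => (Fm ω, (Tm ω, X₂ ω))) := by
          rw [hTm1]
          exact ent_comp_inj p (fun ω => (Fm ω, (Tm ω, X₂ ω)))
            (fun x => (e (x.1, x.2.1), x.2.2)) (pair_reassoc_inj e he)
        simp only [condEnt]
        rw [hh]
        ring
      rcases Nat.mod_two_eq_zero_or_one m with hpar | hpar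
      · obtain ⟨g, hg⟩ := hodd ⟨m, hmr⟩ hpar
        have hz : condEnt p Fm (fun ω => (Tm ω, X₁ ω)) = 0 :=
          condEnt_comp_zero p Fm (fun ω => (Tm ω, X₁ ω))
            (fun q => g q.2 q.1) (fun ω => hg ω)
        have hb : condEnt p Fm (fun ω => (Tm ω, X₂ ω)) ≤ condEnt p Fm Tm :=
          condEnt_cond_pair_le p hp Fm X₂ Tm
        linarith
      · obtain ⟨g, hg⟩ := heven ⟨m, hmr⟩ hpar
        have hz : condEnt p Fm (fun ω => (Tm ω, X₂ ω)) = 0 :=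
          condEnt_comp_zero p Fm (fun ω => (Tm ω, X₂ ω))
            (fun q => g q.2 q.1) (fun ω => hg ω)
        have hb : condEnt p Fm (fun ω => (Tm ω, X₁ ω)) ≤ condEnt p Fm Tm :=
          condEnt_cond_pair_le p hp Fm X₁ Tm
        linarith
  exact key r le_rfl
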